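/- Let Λ be a free ℤ-module of finite rank and c : Λ → Λ a ℤ-linear involution such that rank Λ⁺ = rank Λ⁻. Then #(Λ⁻/(c−1)Λ) = #(Λ⁺/(c+1)Λ). -/

import Mathlib

open LinearMap

/-- The doubling subgroup `{x | ∃ y, y + y = x}`. -/
private def dbl (M : Type*) [AddCommGroup M] : AddSubgroup M :=
  (AddMonoidHom.id M + AddMonoidHom.id M).range

private lemma mem_dbl {M : Type*} [AddCommGroup M] {x : M} :
    x ∈ dbl M ↔ ∃ y : M, y + y = x := by
  simp [dbl, AddMonoidHom.mem_range, AddMonoidHom.add_apply]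

private lemma int_module_eq {M : Type*} [AddCommGroup M] (i1 i2 : Module ℤ M) : i1 = i2 := by
  have h := AddCommGroup.uniqueIntModule (M := M)
  rw [h.uniq i1, h.uniq i2]

private lemma free_transport {M : Type*} [AddCommGroup M] {i1 i2 : Module ℤ M}
    (h : @Module.Free ℤ M _ _ i1) : @Module.Free ℤ M _ _ i2 := by
  rw [int_module_eq i2 i1]; exact h

private lemma finite_transport {M : Type*} [AddCommGroup M] {i1 i2 : Module ℤ M}
    (h : @Module.Finite ℤ M _ _ i1) : @Module.Finite ℤ M _ _ i2 := by
  rw [int_module_eq i2 i1]; exact h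

private lemma finrank_int_congr {M : Type*} [AddCommGroup M] (i1 i2 : Module ℤ M) :
    @Module.finrank ℤ M _ _ i1 = @Module.finrank ℤ M _ _ i2 := by
  rw [int_module_eq i1 i2]

/-- Cardinality of `M / 2M` for a finite free `ℤ`-module. -/
private lemma card_quot_dbl (M : Type*) [AddCommGroup M] [Module ℤ M]
    [Module.Free ℤ M] [Module.Finite ℤ M] :
    Nat.card (M ⧸ dbl M) = 2 ^ Module.finrank ℤ M := by
  classical
  set ι := Module.Free.ChooseBasisIndex ℤ M with hι
  let b : Module.Basis ι ℤ M := Module.Free.chooseBasis ℤ M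
  let ψ : M →+ (ι → ZMod 2) :=
  { toFun := fun x i => ((b.repr x i : ℤ) : ZMod 2)
    map_zero' := by funext i; simp
    map_add' := fun x y => by funext i; push_cast [map_add]; simp }
  have hsurj : Function.Surjective ψ := by
    intro f
    refine ⟨b.equivFun.symm (fun i => ((f i).val : ℤ)), ?_⟩
    funext i
    have h1 : b.repr (b.equivFun.symm fun i => ((f i).val : ℤ)) i = ((f i).val : ℤ) := by
      have h2 := congrFun (b.equivFun.apply_symm_apply (fun i => ((f i).val : ℤ))) i
      rwa [b.equivFun_apply] at h2
    show ((b.repr _ i : ℤ) : ZMod 2) = f i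
    rw [h1]
    simp
  have hker : ψ.ker = dbl M := by
    ext x
    simp only [AddMonoidHom.mem_ker, mem_dbl]
    constructor
    · intro h
      have hdvd : ∀ i, (2 : ℤ) ∣ b.repr x i := by
        intro i
        have hx : ((b.repr x i : ℤ) : ZMod 2) = 0 := congrFun h i
        rwa [ZMod.intCast_zmod_eq_zero_iff_dvd] at hx
      refine ⟨b.equivFun.symm (fun i => b.repr x i / 2), ?_⟩
      apply b.equivFun.injective
      funext i
      simp only [map_add, Pi.add_apply]
      have hrepr : b.equivFun (b.equivFun.symm fun i => b.repr x i / 2) i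
          = b.repr x i / 2 := congrFun (b.equivFun.apply_symm_apply _) i
      rw [hrepr, b.equivFun_apply]
      obtain ⟨k, hk⟩ := hdvd i
      rw [hk]
      omega
    · rintro ⟨y, rfl⟩
      funext i
      show ((b.repr (y + y) i : ℤ) : ZMod 2) = 0
      rw [map_add, Finsupp.add_apply, ZMod.intCast_zmod_eq_zero_iff_dvd]
      exact ⟨b.repr y i, (two_mul _).symm⟩
  have e : (M ⧸ dbl M) ≃+ (ι → ZMod 2) := by
    rw [← hker]
    exact QuotientAddGroup.quotientKerEquivOfSurjective ψ hsurj
  rw [Nat.card_congr e.toEquiv, Nat.card_pi]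
  simp [Nat.card_zmod, Module.finrank_eq_card_chooseBasisIndex ℤ M]
  exact Fintype.card_congr (Equiv.refl _)

section Aux

variable {Λ : Type*} [AddCommGroup Λ] [Module ℤ Λ]
  [Module.Free ℤ Λ] [Module.Finite ℤ Λ]

private lemma aux (c : Λ →ₗ[ℤ] Λ) (hc : c ∘ₗ c = LinearMap.id) :
    Nat.card (Λ ⧸ (LinearMap.ker (c - LinearMap.id) ⊔
        LinearMap.ker (c + LinearMap.id)).toAddSubgroup) *
      (LinearMap.range (c - LinearMap.id)).toAddSubgroup.relIndex
        (LinearMap.ker (c + LinearMap.id)).toAddSubgroup =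
    2 ^ Module.finrank ℤ (LinearMap.ker (c + LinearMap.id)) := by
  classical
  have hcc : ∀ x : Λ, c (c x) = x := fun x => by
    have h := LinearMap.ext_iff.mp hc x; simpa using h
  set P : Submodule ℤ Λ := LinearMap.ker (c - LinearMap.id) with hP
  set K : Submodule ℤ Λ := LinearMap.ker (c + LinearMap.id) with hK
  set R : Submodule ℤ Λ := LinearMap.range (c - LinearMap.id) with hR
  have hmemK : ∀ x : Λ, x ∈ K ↔ c x = -x := fun x => by
    rw [hK, LinearMap.mem_ker, LinearMap.add_apply, LinearMap.id_apply,
      add_eq_zero_iff_eq_neg]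
  have hmemP : ∀ x : Λ, x ∈ P ↔ c x = x := fun x => by
    rw [hP, LinearMap.mem_ker, LinearMap.sub_apply, LinearMap.id_apply, sub_eq_zero]
  have hmemR : ∀ x : Λ, x ∈ R ↔ ∃ z, c z - z = x := fun x => by
    rw [hR]
    constructor
    · rintro ⟨z, rfl⟩; exact ⟨z, by simp⟩
    · rintro ⟨z, hz⟩; exact ⟨z, by simpa using hz⟩
  -- the subgroup 2K
  set T : AddSubgroup Λ := ((AddMonoidHom.id Λ + AddMonoidHom.id Λ).comp
      K.toAddSubgroup.subtype).range with hT
  have hmemT : ∀ x : Λ, x ∈ T ↔ ∃ y ∈ K, y + y = x := by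
    intro x
    constructor
    · rintro ⟨⟨y, hy⟩, rfl⟩
      exact ⟨y, hy, rfl⟩
    · rintro ⟨y, hy, rfl⟩
      exact ⟨⟨y, hy⟩, rfl⟩
  have hTR : T ≤ R.toAddSubgroup := by
    intro x hx
    obtain ⟨y, hy, rfl⟩ := (hmemT x).mp hx
    rw [Submodule.mem_toAddSubgroup]
    refine (hmemR _).mpr ⟨-y, ?_⟩
    have hy' := (hmemK y).mp hy
    rw [map_neg, hy']
    abel
  have hRK : R.toAddSubgroup ≤ K.toAddSubgroup := by
    intro x hx
    rw [Submodule.mem_toAddSubgroup] at hx ⊢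
    obtain ⟨z, hz⟩ := (hmemR x).mp hx
    refine (hmemK x).mpr ?_
    rw [← hz, map_sub, hcc]
    abel
  -- step (iii): relindex T K = 2 ^ finrank K
  have step3 : T.relIndex K.toAddSubgroup = 2 ^ Module.finrank ℤ K := by
    have hEq : T.addSubgroupOf K.toAddSubgroup = dbl ↥K.toAddSubgroup := by
      ext ⟨x, hx⟩
      rw [AddSubgroup.mem_addSubgroupOf, mem_dbl]
      constructor
      · intro h
        obtain ⟨y, hy, hyx⟩ := (hmemT x).mp h
        exact ⟨⟨y, hy⟩, Subtype.ext hyx⟩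
      · rintro ⟨⟨y, hy⟩, h⟩
        exact (hmemT x).mpr ⟨y, hy, congrArg Subtype.val h⟩
    have hcard : T.relIndex K.toAddSubgroup
        = Nat.card (↥K.toAddSubgroup ⧸ dbl ↥K.toAddSubgroup) := by
      rw [AddSubgroup.relIndex, hEq]; rfl
    rw [hcard]
    -- instances for ↥K
    obtain ⟨m, bK⟩ := Submodule.basisOfPid (Module.Free.chooseBasis ℤ Λ) K
    have i1 := @Module.Free.of_basis ℤ ↥K _ K.addCommMonoid K.module _ bK
    have i2 := @Module.Finite.of_basis ℤ ↥K _ _ K.addCommMonoid K.module _ bK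
    refine Eq.trans (@card_quot_dbl ↥K.toAddSubgroup _ (AddCommGroup.toIntModule _)
      (free_transport i1) (finite_transport i2)) ?_
    congr 1
  -- step (v): relindex T R = card (Λ / (P ⊔ K))
  have step5 : T.relIndex R.toAddSubgroup = Nat.card (Λ ⧸ (P ⊔ K).toAddSubgroup) := by
    have hmem : ∀ x : Λ, c x - x ∈ R.toAddSubgroup := fun x =>
      (Submodule.mem_toAddSubgroup _).mpr ((hmemR _).mpr ⟨x, rfl⟩)
    let f : Λ →+ ↥R.toAddSubgroup :=
    { toFun := fun x => ⟨c x - x, hmem x⟩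
      map_zero' := by ext; simp
      map_add' := fun x y => by
        ext
        show c (x + y) - (x + y) = (c x - x) + (c y - y)
        rw [map_add]; abel }
    let φ : Λ →+ (↥R.toAddSubgroup ⧸ T.addSubgroupOf R.toAddSubgroup) :=
      (QuotientAddGroup.mk' (T.addSubgroupOf R.toAddSubgroup)).comp f
    have hφsurj : Function.Surjective φ := by
      rintro q
      obtain ⟨⟨x, hx⟩, rfl⟩ := QuotientAddGroup.mk'_surjective _ q
      obtain ⟨z, hz⟩ := (hmemR x).mp ((Submodule.mem_toAddSubgroup _).mp hx)
      exact ⟨z, congrArg _ (Subtype.ext hz)⟩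
    have hker : φ.ker = (P ⊔ K).toAddSubgroup := by
      ext x
      rw [AddMonoidHom.mem_ker, Submodule.mem_toAddSubgroup]
      have hquot : φ x = 0 ↔ f x ∈ T.addSubgroupOf R.toAddSubgroup :=
        QuotientAddGroup.eq_zero_iff (f x)
      rw [hquot, AddSubgroup.mem_addSubgroupOf]
      show (c x - x ∈ T) ↔ _
      rw [hmemT]
      constructor
      · rintro ⟨y, hy, hyx⟩
        have hcy := (hmemK y).mp hy
        have hxy : x + y ∈ P := by
          rw [hmemP, map_add, hcy]
          have : c x = x + (y + y) := by rw [hyx]; abel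
          rw [this]; abel
        have hyK : -y ∈ K := neg_mem hy
        have : x = (x + y) + (-y) := by abel
        rw [this]
        exact Submodule.add_mem_sup hxy hyK
      · intro hx
        obtain ⟨u, hu, v, hv, rfl⟩ := Submodule.mem_sup.mp hx
        refine ⟨-v, neg_mem hv, ?_⟩
        have hcu := (hmemP u).mp hu
        have hcv := (hmemK v).mp hv
        rw [map_add, hcu, hcv]
        abel
    have e := QuotientAddGroup.quotientKerEquivOfSurjective φ hφsurj
    rw [← hker]
    have : T.relIndex R.toAddSubgroup
        = Nat.card (↥R.toAddSubgroup ⧸ T.addSubgroupOf R.toAddSubgroup) := rfl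
    rw [this, ← Nat.card_congr e.toEquiv]
  have step6 := AddSubgroup.relIndex_mul_relIndex T R.toAddSubgroup K.toAddSubgroup hTR hRK
  rw [← step3, ← step6, step5]

end Aux

theorem card_quotient_eq_of_finrank_eq (Λ : Type*) [AddCommGroup Λ] [Module ℤ Λ]
    [Module.Free ℤ Λ] [Module.Finite ℤ Λ]
    (c : Λ →ₗ[ℤ] Λ) (hc : c ∘ₗ c = LinearMap.id)
    (hrank : Module.finrank ℤ (LinearMap.ker (c - LinearMap.id)) =
      Module.finrank ℤ (LinearMap.ker (c + LinearMap.id))) :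
    Nat.card ((LinearMap.ker (c + LinearMap.id)).toAddSubgroup ⧸
        (LinearMap.range (c - LinearMap.id)).toAddSubgroup.addSubgroupOf
          (LinearMap.ker (c + LinearMap.id)).toAddSubgroup) =
    Nat.card ((LinearMap.ker (c - LinearMap.id)).toAddSubgroup ⧸
        (LinearMap.range (c + LinearMap.id)).toAddSubgroup.addSubgroupOf
          (LinearMap.ker (c - LinearMap.id)).toAddSubgroup) := by
  have hc' : (-c) ∘ₗ (-c) = LinearMap.id := by
    rw [LinearMap.neg_comp, LinearMap.comp_neg, neg_neg, hc]
  have h1 := aux c hc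
  have h2 := aux (-c) hc'
  have e1 : -c - LinearMap.id = -(c + LinearMap.id) := by
    ext x
    simp only [LinearMap.add_apply, LinearMap.sub_apply, LinearMap.neg_apply,
      LinearMap.id_apply]
    abel
  have e2 : -c + LinearMap.id = -(c - LinearMap.id) := by
    ext x
    simp only [LinearMap.add_apply, LinearMap.sub_apply, LinearMap.neg_apply,
      LinearMap.id_apply]
    abel
  have kneg : ∀ f : Λ →ₗ[ℤ] Λ, LinearMap.ker (-f) = LinearMap.ker f := fun f => by
    ext x; simp
  have rneg : ∀ f : Λ →ₗ[ℤ] Λ, LinearMap.range (-f) = LinearMap.range f := fun f => by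
    ext x
    constructor
    · rintro ⟨z, rfl⟩; exact ⟨-z, by simp⟩
    · rintro ⟨z, rfl⟩; exact ⟨-z, by simp⟩
  rw [e1, e2, kneg, kneg, rneg, sup_comm] at h2
  rw [hrank] at h2
  have hA : Nat.card ((LinearMap.ker (c + LinearMap.id)).toAddSubgroup ⧸
      (LinearMap.range (c - LinearMap.id)).toAddSubgroup.addSubgroupOf
        (LinearMap.ker (c + LinearMap.id)).toAddSubgroup)
      = (LinearMap.range (c - LinearMap.id)).toAddSubgroup.relIndex
        (LinearMap.ker (c + LinearMap.id)).toAddSubgroup := rfl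
  have hB : Nat.card ((LinearMap.ker (c - LinearMap.id)).toAddSubgroup ⧸
      (LinearMap.range (c + LinearMap.id)).toAddSubgroup.addSubgroupOf
        (LinearMap.ker (c - LinearMap.id)).toAddSubgroup)
      = (LinearMap.range (c + LinearMap.id)).toAddSubgroup.relIndex
        (LinearMap.ker (c - LinearMap.id)).toAddSubgroup := rfl
  rw [hA, hB]
  have hs : Nat.card (Λ ⧸ (LinearMap.ker (c - LinearMap.id) ⊔
      LinearMap.ker (c + LinearMap.id)).toAddSubgroup) ≠ 0 := by
    intro h0
    rw [h0, zero_mul] at h1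
    exact (pow_ne_zero _ two_ne_zero) h1.symm
  exact Nat.eq_of_mul_eq_mul_left (Nat.pos_of_ne_zero hs) (h1.trans h2.symm)
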